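/- Let (X,κ) be a digital image, let f : [0,m]_ℤ → X be a loop, and let f̄ : [0,n]_ℤ → X be a trivial extension of f. Then f_∞ and f̄_∞ are EC homotopic holding the endpoints fixed. -/

import Mathlib

/-- 2-adjacency (c₁-adjacency) on the natural numbers / digital intervals. -/
def natAdj (a b : ℕ) : Prop := b = a + 1 ∨ a = b + 1

/-- Digital `(κ,μ)`-continuity of a function between digital images. -/
def DigCont {X Y : Type*} (κ : X → X → Prop) (μ : Y → Y → Prop) (f : X → Y) : Prop :=
  ∀ a b, κ a b → f a = f b ∨ μ (f a) (f b)

/-- `(2,κ)`-continuity for functions on `ℕ* = {0,1,2,…}` with 2-adjacency. -/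
def ECCont {X : Type*} (κ : X → X → Prop) (f : ℕ → X) : Prop :=
  ∀ a b, natAdj a b → f a = f b ∨ κ (f a) (f b)

/-- An eventually constant (EC) path in `(X,κ)`. -/
def IsECPath {X : Type*} (κ : X → X → Prop) (f : ℕ → X) : Prop :=
  ECCont κ f ∧ ∃ N, ∀ n, N ≤ n → f n = f N

/-- `N_f`, the least index after which `f` is constant. -/
noncomputable def ecN {X : Type*} (f : ℕ → X) : ℕ :=
  sInf {m | ∀ n, m ≤ n → f n = f m}

/-- An EC homotopy from `f` to `g` (each stage is an EC path). -/
def IsECHomotopy {X : Type*} (κ : X → X → Prop) (f g : ℕ → X) (k : ℕ)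
    (H : ℕ → ℕ → X) : Prop :=
  (∀ n, H n 0 = f n) ∧ (∀ n, H n k = g n) ∧
  (∀ n s t, s ≤ k → t ≤ k → natAdj s t → H n s = H n t ∨ κ (H n s) (H n t)) ∧
  (∀ t, t ≤ k → IsECPath κ (fun n => H n t))

/-- The EC homotopy `H` from `f` to `g` holds the endpoints fixed. -/
def ECHoldsEnds {X : Type*} (f g : ℕ → X) (k : ℕ) (H : ℕ → ℕ → X) : Prop :=
  f 0 = g 0 ∧ (∀ t, t ≤ k → H 0 t = f 0) ∧
  ∃ c, ∀ n, c ≤ n → f n = g n ∧ ∀ t, t ≤ k → H n t = f n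

/-- `f` and `g` are EC homotopic. -/
def ECHomotopic {X : Type*} (κ : X → X → Prop) (f g : ℕ → X) : Prop :=
  ∃ k H, IsECHomotopy κ f g k H

/-- `f` and `g` are EC homotopic holding the endpoints fixed. -/
def ECHomotopicFix {X : Type*} (κ : X → X → Prop) (f g : ℕ → X) : Prop :=
  ∃ k H, IsECHomotopy κ f g k H ∧ ECHoldsEnds f g k H

/-- A finite digital path `f : [0,m]_ℤ → X`, represented by its length `len`
and its values, frozen (constant) beyond `len`. -/
structure DPath (X : Type*) where
  len : ℕ
  toFun : ℕ → X
  frozen : ∀ n, len ≤ n → toFun n = toFun len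

/-- `p_∞ : ℕ* → X`, the eventually constant extension of a finite path. -/
def DPath.inf {X : Type*} (p : DPath X) : ℕ → X := fun n => p.toFun (min n p.len)

/-- `(2,κ)`-continuity of a finite path on its domain `[0,len]_ℤ`. -/
def DPath.IsCont {X : Type*} (κ : X → X → Prop) (p : DPath X) : Prop :=
  ∀ a b, a ≤ p.len → b ≤ p.len → natAdj a b →
    p.toFun a = p.toFun b ∨ κ (p.toFun a) (p.toFun b)

/-- `f_-`, the restriction of an EC path `f` to `[0, N_f]_ℤ`. -/
noncomputable def ecTrunc {X : Type*} (f : ℕ → X) : DPath X where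
  len := ecN f
  toFun := fun n => f (min n (ecN f))
  frozen := by intro n hn; simp [min_eq_right hn]

/-- Concatenation (product) `p * q` of finite paths. -/
def DPath.concat {X : Type*} (p q : DPath X) : DPath X where
  len := p.len + q.len
  toFun := fun t => if t < p.len then p.toFun t else q.toFun (t - p.len)
  frozen := by
    intro n hn
    have h1 : ¬ n < p.len := by omega
    have h2 : ¬ p.len + q.len < p.len := by omega
    simp only [if_neg h1, if_neg h2]
    rw [q.frozen (n - p.len) (by omega), Nat.add_sub_cancel_left]

/-- A constant (trivial) path. -/
def IsConstPath {X : Type*} (p : DPath X) : Prop := ∀ n, p.toFun n = p.toFun 0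

/-- The product `p * l₀ * l₁ * ⋯` of a nonempty family of paths. -/
def concatAll {X : Type*} (p : DPath X) (l : List (DPath X)) : DPath X :=
  l.foldl DPath.concat p

/-- Consecutive paths in the list are composable (endpoints match). -/
def ChainOK {X : Type*} (l : List (DPath X)) : Prop :=
  l.Chain' (fun p q => p.toFun p.len = q.toFun 0)

/-- `TrivExt κ f f'` : the path `f'` is a trivial extension of the path `f`:
`f = f₁ * ⋯ * f_k`, `f' = F₁ * ⋯ * F_p`, with indices `i₁ < ⋯ < i_k`,
`F_{i_j} = f_j`, and every other `F_i` a constant loop. -/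
def TrivExt {X : Type*} (κ : X → X → Prop) (f f' : DPath X) : Prop :=
  ∃ (a : DPath X) (fs : List (DPath X)) (b : DPath X) (Fs : List (DPath X)),
    (∀ r ∈ a :: fs, DPath.IsCont κ r) ∧ (∀ r ∈ b :: Fs, DPath.IsCont κ r) ∧
    ChainOK (a :: fs) ∧ ChainOK (b :: Fs) ∧
    f = concatAll a fs ∧ f' = concatAll b Fs ∧
    ∃ idx : Fin (a :: fs).length → Fin (b :: Fs).length,
      StrictMono idx ∧
      (∀ j, (b :: Fs).get (idx j) = (a :: fs).get j) ∧
      (∀ i, (∀ j, idx j ≠ i) → IsConstPath ((b :: Fs).get i))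

/-- A digital homotopy `H : [0,m]_ℤ × [0,k]_ℤ → X` between paths `F` and `G`. -/
def IsPathHomotopy {X : Type*} (κ : X → X → Prop) (m k : ℕ) (F G : ℕ → X)
    (H : ℕ → ℕ → X) : Prop :=
  (∀ t, t ≤ m → H t 0 = F t) ∧ (∀ t, t ≤ m → H t k = G t) ∧
  (∀ t, t ≤ m → ∀ s₁ s₂, s₁ ≤ k → s₂ ≤ k → natAdj s₁ s₂ →
    H t s₁ = H t s₂ ∨ κ (H t s₁) (H t s₂)) ∧
  (∀ s, s ≤ k → ∀ t₁ t₂, t₁ ≤ m → t₂ ≤ m → natAdj t₁ t₂ →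
    H t₁ s = H t₂ s ∨ κ (H t₁ s) (H t₂ s))

/-- The homotopy `H` between paths `F, G : [0,m]_ℤ → X` holds the endpoints fixed. -/
def PathHoldsEnds {X : Type*} (m k : ℕ) (F G : ℕ → X) (H : ℕ → ℕ → X) : Prop :=
  F 0 = G 0 ∧ F m = G m ∧ ∀ s, s ≤ k → H 0 s = F 0 ∧ H m s = F m

/-- Paths `F, G : [0,m]_ℤ → X` are homotopic. -/
def PathHomotopic {X : Type*} (κ : X → X → Prop) (m : ℕ) (F G : ℕ → X) : Prop :=
  ∃ k H, IsPathHomotopy κ m k F G H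

/-- Paths `F, G : [0,m]_ℤ → X` are homotopic holding the endpoints fixed. -/
def PathHomotopicFix {X : Type*} (κ : X → X → Prop) (m : ℕ) (F G : ℕ → X) : Prop :=
  ∃ k H, IsPathHomotopy κ m k F G H ∧ PathHoldsEnds m k F G H

/-! ### Auxiliary machinery: reparametrizations -/

lemma DPath.ext' {X : Type*} {p q : DPath X} (h1 : p.len = q.len)
    (h2 : p.toFun = q.toFun) : p = q := by
  cases p; cases q; cases h1; cases h2; rfl

/-- `q` is a "lazy reparametrization" of `p`. -/
def Reparam {X : Type*} (p q : DPath X) : Prop :=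
  ∃ φ : ℕ → ℕ, φ 0 = 0 ∧ (∀ n, φ (n+1) = φ n ∨ φ (n+1) = φ n + 1) ∧
    φ q.len = p.len ∧ ∀ n, n ≤ q.len → φ n ≤ p.len ∧ q.toFun n = p.toFun (φ n)

lemma reparam_refl {X : Type*} (p : DPath X) : Reparam p p := by
  refine ⟨fun n => min n p.len, ?_, ?_, ?_, ?_⟩
  · simp
  · intro n; dsimp only; omega
  · dsimp only; omega
  · intro n hn; dsimp only; exact ⟨min_le_right _ _, by rw [min_eq_left hn]⟩

lemma reparam_concat {X : Type*} {p p' q q' : DPath X} (h : Reparam p q)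
    (h' : Reparam p' q') (hpp : p.toFun p.len = p'.toFun 0) :
    Reparam (p.concat p') (q.concat q') := by
  obtain ⟨φ, h0, hs, he, hv⟩ := h
  obtain ⟨φ', h0', hs', he', hv'⟩ := h'
  have hplen : (p.concat p').len = p.len + p'.len := rfl
  have hqlen : (q.concat q').len = q.len + q'.len := rfl
  refine ⟨fun n => if n < q.len then φ n else p.len + φ' (n - q.len), ?_, ?_, ?_, ?_⟩
  all_goals dsimp only
  · by_cases h : 0 < q.len
    · simpa [h] using h0
    · have hq0 : q.len = 0 := by omega
      have : p.len = 0 := by rw [← he, hq0, h0]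
      simp [h, this, hq0, h0']
  · intro n
    by_cases h1 : n + 1 < q.len
    · have h2 : n < q.len := by omega
      simp only [if_pos h1, if_pos h2]; exact hs n
    · by_cases h2 : n < q.len
      · have h3 : n + 1 = q.len := by omega
        have h4 : φ (n+1) = φ n ∨ φ (n+1) = φ n + 1 := hs n
        simp only [if_neg h1, if_pos h2]
        have : n + 1 - q.len = 0 := by omega
        rw [this, h0']
        rw [h3] at h4; rw [he] at h4; omega
      · simp only [if_neg h1, if_neg h2]
        have : n + 1 - q.len = (n - q.len) + 1 := by omega
        rw [this]
        rcases hs' (n - q.len) with h4 | h4 <;> omega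
  · rw [hqlen, hplen]
    have h1 : ¬ q.len + q'.len < q.len := by omega
    rw [if_neg h1]
    have : q.len + q'.len - q.len = q'.len := by omega
    rw [this, he']
  · intro n hn
    rw [hqlen] at hn
    by_cases h1 : n < q.len
    · have hb := hv n (le_of_lt h1)
      simp only [if_pos h1]
      constructor
      · rw [hplen]; omega
      · show (q.concat q').toFun n = (p.concat p').toFun (φ n)
        have e1 : (q.concat q').toFun n = q.toFun n := by
          simp [DPath.concat, h1]
        rw [e1, hb.2]
        by_cases h2 : φ n < p.len
        · simp [DPath.concat, h2]
        · have h3 : φ n = p.len := by omega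
          have : (p.concat p').toFun (φ n) = p'.toFun 0 := by
            simp [DPath.concat, h2, h3]
          rw [this, h3, hpp]
    · have hb := hv' (n - q.len) (by omega)
      simp only [if_neg h1]
      constructor
      · rw [hplen]; omega
      · show (q.concat q').toFun n = (p.concat p').toFun (p.len + φ' (n - q.len))
        have e1 : (q.concat q').toFun n = q'.toFun (n - q.len) := by
          simp [DPath.concat, h1]
        have h2 : ¬ p.len + φ' (n - q.len) < p.len := by omega
        have e2 : (p.concat p').toFun (p.len + φ' (n - q.len))
            = p'.toFun (φ' (n - q.len)) := by
          simp [DPath.concat, h2]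
        rw [e1, e2, hb.2]

lemma reparam_concat_const {X : Type*} {p q c : DPath X} (h : Reparam p q)
    (hc : IsConstPath c) (hc0 : c.toFun 0 = q.toFun q.len) :
    Reparam p (q.concat c) := by
  obtain ⟨φ, h0, hs, he, hv⟩ := h
  have hqlen : (q.concat c).len = q.len + c.len := rfl
  refine ⟨fun n => if n ≤ q.len then φ n else p.len, ?_, ?_, ?_, ?_⟩
  all_goals dsimp only
  · simp [h0]
  · intro n
    by_cases h1 : n + 1 ≤ q.len
    · have h2 : n ≤ q.len := by omega
      simp only [if_pos h1, if_pos h2]; exact hs n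
    · by_cases h2 : n ≤ q.len
      · have h3 : n = q.len := by omega
        left; rw [if_neg h1, if_pos h2, h3, he]
      · rw [if_neg h1, if_neg h2]; left; rfl
  · rw [hqlen]
    by_cases h1 : q.len + c.len ≤ q.len
    · have : c.len = 0 := by omega
      simp [this, he]
    · simp [h1]
  · intro n hn
    rw [hqlen] at hn
    by_cases h1 : n ≤ q.len
    · have hb := hv n h1
      simp only [if_pos h1]
      refine ⟨hb.1, ?_⟩
      show (q.concat c).toFun n = p.toFun (φ n)
      by_cases h2 : n < q.len
      · have : (q.concat c).toFun n = q.toFun n := by simp [DPath.concat, h2]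
        rw [this, hb.2]
      · have h3 : n = q.len := by omega
        have : (q.concat c).toFun n = c.toFun (n - q.len) := by
          simp [DPath.concat, h2]
        rw [this, hc (n - q.len), hc0, h3]; exact (hv q.len le_rfl).2
    · simp only [if_neg h1]
      refine ⟨le_refl _, ?_⟩
      show (q.concat c).toFun n = p.toFun p.len
      have h2 : ¬ n < q.len := by omega
      have : (q.concat c).toFun n = c.toFun (n - q.len) := by
        simp [DPath.concat, h2]
      rw [this, hc (n - q.len), hc0, (hv q.len le_rfl).2, he]

lemma reparam_const_concat {X : Type*} {p q c : DPath X} (h : Reparam p q)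
    (hc : IsConstPath c) (hc0 : c.toFun c.len = q.toFun 0) :
    Reparam p (c.concat q) := by
  obtain ⟨φ, h0, hs, he, hv⟩ := h
  have hqlen : (c.concat q).len = c.len + q.len := rfl
  have hq0 : q.toFun 0 = p.toFun 0 := by
    have := (hv 0 (Nat.zero_le _)).2
    rw [this, h0]
  refine ⟨fun n => if n < c.len then 0 else φ (n - c.len), ?_, ?_, ?_, ?_⟩
  all_goals dsimp only
  · by_cases h1 : 0 < c.len <;> simp [h1, h0]
  · intro n
    by_cases h1 : n + 1 < c.len
    · have h2 : n < c.len := by omega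
      simp [h1, h2]
    · by_cases h2 : n < c.len
      · have h3 : n + 1 = c.len := by omega
        have : n + 1 - c.len = 0 := by omega
        simp [h1, h2, this, h0]
      · simp only [if_neg h1, if_neg h2]
        have : n + 1 - c.len = (n - c.len) + 1 := by omega
        rw [this]; exact hs (n - c.len)
  · rw [hqlen]
    have h1 : ¬ c.len + q.len < c.len := by omega
    have : c.len + q.len - c.len = q.len := by omega
    rw [if_neg h1, this, he]
  · intro n hn
    rw [hqlen] at hn
    by_cases h1 : n < c.len
    · simp only [if_pos h1]
      refine ⟨Nat.zero_le _, ?_⟩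
      show (c.concat q).toFun n = p.toFun 0
      have : (c.concat q).toFun n = c.toFun n := by simp [DPath.concat, h1]
      rw [this, hc n, ← hc c.len, hc0, hq0]
    · have hb := hv (n - c.len) (by omega)
      simp only [if_neg h1]
      refine ⟨hb.1, ?_⟩
      show (c.concat q).toFun n = p.toFun (φ (n - c.len))
      have : (c.concat q).toFun n = q.toFun (n - c.len) := by
        simp [DPath.concat, h1]
      rw [this, hb.2]

lemma concat_assoc {X : Type*} (p q r : DPath X) :
    (p.concat q).concat r = p.concat (q.concat r) := by
  refine DPath.ext' ?_ ?_
  · show p.len + q.len + r.len = p.len + (q.len + r.len); omega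
  · funext t
    show (if t < p.len + q.len then (if t < p.len then p.toFun t else q.toFun (t - p.len))
          else r.toFun (t - (p.len + q.len)))
        = if t < p.len then p.toFun t
          else (if t - p.len < q.len then q.toFun (t - p.len) else r.toFun (t - p.len - q.len))
    split_ifs <;> first | rfl | omega | (congr 1; omega)

lemma foldl_concat_assoc {X : Type*} :
    ∀ (l : List (DPath X)) (p q : DPath X),
      List.foldl DPath.concat (p.concat q) l = p.concat (List.foldl DPath.concat q l)
  | [], p, q => rfl
  | c :: l, p, q => by
    show List.foldl DPath.concat ((p.concat q).concat c) l = _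
    rw [concat_assoc]
    exact foldl_concat_assoc l p (q.concat c)

lemma concatAll_cons {X : Type*} (p c : DPath X) (l : List (DPath X)) :
    concatAll p (c :: l) = p.concat (concatAll c l) := by
  show List.foldl DPath.concat (p.concat c) l = _
  exact foldl_concat_assoc l p c

lemma concatAll_start {X : Type*} :
    ∀ (l : List (DPath X)) (p : DPath X), ChainOK (p :: l) →
      (concatAll p l).toFun 0 = p.toFun 0
  | [], p, _ => rfl
  | c :: l, p, h => by
    rw [concatAll_cons]
    have hrel : p.toFun p.len = c.toFun 0 := (List.isChain_cons_cons.mp h).1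
    have htail : ChainOK (c :: l) := (List.isChain_cons_cons.mp h).2
    show (if 0 < p.len then p.toFun 0 else (concatAll c l).toFun (0 - p.len)) = p.toFun 0
    by_cases hp : 0 < p.len
    · simp [hp]
    · have hp0 : p.len = 0 := by omega
      rw [if_neg hp, hp0, Nat.sub_zero, concatAll_start l c htail, ← hrel, hp0]

lemma concat_end {X : Type*} (p q : DPath X) :
    (p.concat q).toFun (p.concat q).len = q.toFun q.len := by
  show (if p.len + q.len < p.len then _ else q.toFun (p.len + q.len - p.len)) = _
  rw [if_neg (by omega)]
  congr 1
  omega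

lemma reparam_fold_consts {X : Type*} :
    ∀ (cs : List (DPath X)) (p acc : DPath X),
      Reparam p acc → (∀ c ∈ cs, IsConstPath c) → ChainOK (acc :: cs) →
      Reparam p (List.foldl DPath.concat acc cs)
  | [], _, _, h, _, _ => h
  | c :: cs, p, acc, h, hconst, hchain => by
    show Reparam p (List.foldl DPath.concat (acc.concat c) cs)
    have hrel : acc.toFun acc.len = c.toFun 0 := (List.isChain_cons_cons.mp hchain).1
    have htail : ChainOK (c :: cs) := (List.isChain_cons_cons.mp hchain).2
    refine reparam_fold_consts cs p (acc.concat c) ?_ ?_ ?_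
    · exact reparam_concat_const h (hconst c (by simp)) hrel.symm
    · exact fun d hd => hconst d (by simp [hd])
    · cases cs with
      | nil => exact List.isChain_singleton _
      | cons d ds =>
        refine List.isChain_cons_cons.mpr ⟨?_, (List.isChain_cons_cons.mp htail).2⟩
        rw [concat_end]
        exact (List.isChain_cons_cons.mp htail).1

lemma get_cons_pos {α : Type*} (x : α) (l : List α) (i : ℕ) (h : i + 1 < (x :: l).length) :
    (x :: l).get ⟨i + 1, h⟩ = l.get ⟨i, by simpa using h⟩ := rfl

lemma get_cons_eq_get {α : Type*} (x : α) (l : List α) (i : Fin (x :: l).length)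
    (h : 0 < (i : ℕ)) :
    (x :: l).get i = l.get ⟨(i : ℕ) - 1, by
      have := i.isLt; simp only [List.length_cons] at this; omega⟩ := by
  rcases i with ⟨iv, hiv⟩
  cases iv with
  | zero => exact absurd h (lt_irrefl 0)
  | succ m => rfl

/-- Main structural lemma: a trivial-extension decomposition yields a
reparametrization. -/
lemma main_reparam {X : Type*} :
    ∀ (N : ℕ) (a : DPath X) (fs : List (DPath X)) (b : DPath X) (Fs : List (DPath X)),
      Fs.length ≤ N →
      ChainOK (a :: fs) → ChainOK (b :: Fs) →
      (∃ idx : Fin (a :: fs).length → Fin (b :: Fs).length, StrictMono idx ∧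
        (∀ j, (b :: Fs).get (idx j) = (a :: fs).get j) ∧
        (∀ i, (∀ j, idx j ≠ i) → IsConstPath ((b :: Fs).get i))) →
      Reparam (concatAll a fs) (concatAll b Fs) := by
  intro N
  induction N with
  | zero =>
    intro a fs b Fs hlen hA hB hidx
    obtain ⟨idx, hmono, hget, hconst⟩ := hidx
    have hFs : Fs = [] := List.length_eq_zero_iff.mp (by omega)
    subst hFs
    have hfs : fs = [] := by
      cases fs with
      | nil => rfl
      | cons f fs' =>
        exfalso
        have hcard := Fintype.card_le_of_injective idx hmono.injective
        simp at hcard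
    subst hfs
    have hab : b = a := by
      have hg := hget ⟨0, Nat.succ_pos _⟩
      have hlt := (idx ⟨0, Nat.succ_pos _⟩).isLt
      simp only [List.length_cons, List.length_nil] at hlt
      have h0 : idx ⟨0, Nat.succ_pos _⟩ = ⟨0, Nat.succ_pos _⟩ := by
        apply Fin.ext
        show (idx ⟨0, Nat.succ_pos _⟩ : ℕ) = 0
        omega
      rw [h0] at hg
      exact hg
    subst hab
    exact reparam_refl _
  | succ N ih =>
    intro a fs b Fs hlen hA hB hidx
    obtain ⟨idx, hmono, hget, hconst⟩ := hidx
    by_cases hb0 : (idx ⟨0, Nat.succ_pos _⟩ : ℕ) = 0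
    · -- heads match: b = a
      have hab : b = a := by
        have hg := hget ⟨0, Nat.succ_pos _⟩
        have h0 : idx ⟨0, Nat.succ_pos _⟩ = ⟨0, Nat.succ_pos _⟩ := Fin.ext hb0
        rw [h0] at hg
        exact hg
      subst hab
      cases fs with
      | nil =>
        have hFsconst : ∀ c ∈ Fs, IsConstPath c := by
          intro c hc
          obtain ⟨⟨m, hm⟩, rfl⟩ := List.mem_iff_get.mp hc
          have hres := hconst (Fin.succ ⟨m, hm⟩) ?_
          · exact hres
          · intro j hj
            rcases j with ⟨jv, hjv⟩
            have hjv0 : jv = 0 := by simp at hjv; omega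
            subst hjv0
            have hval : (idx ⟨0, hjv⟩ : ℕ) = 0 := hb0
            have := congrArg Fin.val hj
            rw [hval] at this
            simp [Fin.val_succ] at this
        exact reparam_fold_consts Fs (concatAll b []) b (reparam_refl b) hFsconst hB
      | cons f₁ fs' =>
        cases Fs with
        | nil =>
          exfalso
          have hcard := Fintype.card_le_of_injective idx hmono.injective
          simp at hcard
        | cons b' Fs' =>
          have hpos : ∀ j : Fin (f₁ :: fs').length, 0 < (idx j.succ : ℕ) := by
            intro j
            have hlt : (⟨0, Nat.succ_pos _⟩ : Fin (b :: f₁ :: fs').length) < j.succ := by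
              rw [Fin.lt_def]
              simp [Fin.val_succ]
            have h2 := hmono hlt
            rw [Fin.lt_def, hb0] at h2
            omega
          have hIH : Reparam (concatAll f₁ fs') (concatAll b' Fs') := by
            apply ih f₁ fs' b' Fs' (by simpa using hlen)
              (List.isChain_cons_cons.mp hA).2 (List.isChain_cons_cons.mp hB).2
            refine ⟨fun j => ⟨(idx j.succ : ℕ) - 1, by
                have := (idx j.succ).isLt
                simp only [List.length_cons] at this ⊢; omega⟩, ?_, ?_, ?_⟩
            · intro j j' hjj
              have h2 := hmono (show j.succ < j'.succ by
                rw [Fin.lt_def]; simp [Fin.val_succ]; exact Fin.lt_def.mp hjj)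
              rw [Fin.lt_def] at h2
              have p1 := hpos j
              have p2 := hpos j'
              rw [Fin.lt_def]
              dsimp only
              omega
            · intro j
              dsimp only
              rw [← get_cons_eq_get b (b' :: Fs') (idx j.succ) (hpos j)]
              exact hget j.succ
            · intro i hmiss
              dsimp only at hmiss
              have hres := hconst i.succ ?_
              · exact hres
              · intro j hj
                rcases j with ⟨jv, hjv⟩
                cases jv with
                | zero =>
                  have hval : (idx ⟨0, hjv⟩ : ℕ) = 0 := hb0
                  have := congrArg Fin.val hj
                  rw [hval] at this
                  simp [Fin.val_succ] at this
                | succ m =>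
                  have hm : m < (f₁ :: fs').length := by simpa using hjv
                  have heq : (⟨m + 1, hjv⟩ : Fin (b :: f₁ :: fs').length)
                      = (Fin.succ ⟨m, hm⟩ : Fin (b :: f₁ :: fs').length) := rfl
                  rw [heq] at hj
                  apply hmiss ⟨m, hm⟩
                  apply Fin.ext
                  dsimp only
                  have hv := congrArg Fin.val hj
                  rw [Fin.val_succ] at hv
                  have p1 := hpos ⟨m, hm⟩
                  omega
          rw [concatAll_cons, concatAll_cons]
          refine reparam_concat (reparam_refl b) hIH ?_
          rw [concatAll_start fs' f₁ ((List.isChain_cons_cons.mp hA).2)]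
          exact (List.isChain_cons_cons.mp hA).1
    · -- b is constant, peel it off
      have hallpos : ∀ j : Fin (a :: fs).length, 0 < (idx j : ℕ) := by
        intro j
        have h0 : (⟨0, Nat.succ_pos _⟩ : Fin (a :: fs).length) ≤ j := by
          rw [Fin.le_def]
          simp
        have := hmono.monotone h0
        rw [Fin.le_def] at this
        omega
      have hbconst : IsConstPath b := by
        have hres := hconst ⟨0, Nat.succ_pos _⟩ ?_
        · exact hres
        · intro j hj
          have h1 : (idx j : ℕ) = 0 := congrArg Fin.val hj
          have h2 := hallpos j
          omega
      cases Fs with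
      | nil =>
        exfalso
        have h0 := (idx ⟨0, Nat.succ_pos _⟩).isLt
        have h1 := hallpos ⟨0, Nat.succ_pos _⟩
        simp only [List.length_cons, List.length_nil] at h0
        omega
      | cons b' Fs' =>
        have hIH : Reparam (concatAll a fs) (concatAll b' Fs') := by
          apply ih a fs b' Fs' (by simpa using hlen) hA (List.isChain_cons_cons.mp hB).2
          refine ⟨fun j => ⟨(idx j : ℕ) - 1, by
              have := (idx j).isLt
              simp only [List.length_cons] at this ⊢; omega⟩, ?_, ?_, ?_⟩
          · intro j j' hjj
            have h2 := hmono hjj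
            rw [Fin.lt_def] at h2
            have p1 := hallpos j
            have p2 := hallpos j'
            rw [Fin.lt_def]
            dsimp only
            omega
          · intro j
            dsimp only
            rw [← get_cons_eq_get b (b' :: Fs') (idx j) (hallpos j)]
            exact hget j
          · intro i hmiss
            dsimp only at hmiss
            have hres := hconst i.succ ?_
            · exact hres
            · intro j hj
              apply hmiss j
              apply Fin.ext
              dsimp only
              have hv := congrArg Fin.val hj
              rw [Fin.val_succ] at hv
              have p1 := hallpos j
              omega
        rw [concatAll_cons]
        refine reparam_const_concat hIH hbconst ?_
        rw [concatAll_start Fs' b' ((List.isChain_cons_cons.mp hB).2)]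
        exact (List.isChain_cons_cons.mp hB).1

/-- If `q` is a trivial extension of a loop `f`, then `f_∞` and
`q_∞` are EC homotopic holding the endpoints fixed. -/
theorem trivial_extension_inf_ec_homotopic {X : Type*} (κ : X → X → Prop)
    (hκ : Symmetric κ) (f q : DPath X) (hf : f.IsCont κ)
    (hloop : f.toFun 0 = f.toFun f.len)
    (hext : TrivExt κ f q) :
    ECHomotopicFix κ f.inf q.inf := by
  obtain ⟨a, fs, b, Fs, hca, hcb, hchA, hchB, hfeq, hqeq, idx, hmono, hget, hconst⟩ := hext
  have hrep : Reparam f q := by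
    rw [hfeq, hqeq]
    exact main_reparam Fs.length a fs b Fs le_rfl hchA hchB ⟨idx, hmono, hget, hconst⟩
  obtain ⟨φ, h0, hs, he, hv⟩ := hrep
  have hφle : ∀ n, φ n ≤ n := by
    intro n
    induction n with
    | zero => omega
    | succ n ihn => rcases hs n with h | h <;> omega
  have hfq : f.len ≤ q.len := by have := hφle q.len; omega
  have hΦlef : ∀ n, φ (min n q.len) ≤ f.len := fun n => (hv _ (min_le_right _ _)).1
  have hΦn : ∀ n, φ (min n q.len) ≤ n := fun n => le_trans (hφle _) (min_le_left _ _)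
  have hΦq : ∀ n, q.len ≤ n → φ (min n q.len) = f.len := by
    intro n hn
    rw [min_eq_right hn, he]
  have hΦs : ∀ n, φ (min (n+1) q.len) = φ (min n q.len) ∨
      φ (min (n+1) q.len) = φ (min n q.len) + 1 := by
    intro n
    by_cases h : n + 1 ≤ q.len
    · rw [min_eq_left h, min_eq_left (by omega)]
      exact hs n
    · have heq : min (n+1) q.len = min n q.len := by omega
      rw [heq]
      left; rfl
  have hqval : ∀ n, q.inf n = f.toFun (φ (min n q.len)) :=
    fun n => (hv _ (min_le_right _ _)).2
  refine ⟨q.len, fun n t => f.toFun (min (min (φ (min n q.len) + (q.len - t)) n) f.len),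
    ⟨?_, ?_, ?_, ?_⟩, ?_, ?_, ?_⟩
  · -- H n 0 = f.inf n
    intro n
    simp only [DPath.inf]
    congr 1
    have h1 := hΦlef n
    have h2 := hΦn n
    by_cases hc : q.len ≤ n
    · have h4 := hΦq n hc
      omega
    · omega
  · -- H n q.len = q.inf n
    intro n
    simp only [DPath.inf]
    rw [(hv _ (min_le_right n q.len)).2]
    congr 1
    have h1 := hΦlef n
    have h2 := hΦn n
    omega
  · -- continuity in t
    intro n s t hsk htk hadj
    simp only
    have h1 := hΦlef n
    have h2 := hΦn n
    have key : min (min (φ (min n q.len) + (q.len - s)) n) f.len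
        = min (min (φ (min n q.len) + (q.len - t)) n) f.len ∨
        natAdj (min (min (φ (min n q.len) + (q.len - s)) n) f.len)
          (min (min (φ (min n q.len) + (q.len - t)) n) f.len) := by
      unfold natAdj at hadj ⊢
      omega
    rcases key with h | h
    · left; rw [h]
    · exact hf _ _ (min_le_right _ _) (min_le_right _ _) h
  · -- each stage is an EC path
    intro t ht
    constructor
    · intro n m hadj
      simp only
      rcases hadj with h | h
      · subst h
        have h1 := hΦlef n
        have h1' := hΦlef (n+1)
        have h2 := hΦn n
        have h2' := hΦn (n+1)
        have h3 := hΦs n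
        have key : min (min (φ (min n q.len) + (q.len - t)) n) f.len
            = min (min (φ (min (n+1) q.len) + (q.len - t)) (n+1)) f.len ∨
            natAdj (min (min (φ (min n q.len) + (q.len - t)) n) f.len)
              (min (min (φ (min (n+1) q.len) + (q.len - t)) (n+1)) f.len) := by
          unfold natAdj
          omega
        rcases key with hk | hk
        · left; rw [hk]
        · exact hf _ _ (min_le_right _ _) (min_le_right _ _) hk
      · subst h
        have h1 := hΦlef m
        have h1' := hΦlef (m+1)
        have h2 := hΦn m
        have h2' := hΦn (m+1)
        have h3 := hΦs m
        have key : min (min (φ (min (m+1) q.len) + (q.len - t)) (m+1)) f.len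
            = min (min (φ (min m q.len) + (q.len - t)) m) f.len ∨
            natAdj (min (min (φ (min (m+1) q.len) + (q.len - t)) (m+1)) f.len)
              (min (min (φ (min m q.len) + (q.len - t)) m) f.len) := by
          unfold natAdj
          omega
        rcases key with hk | hk
        · left; rw [hk]
        · exact hf _ _ (min_le_right _ _) (min_le_right _ _) hk
    · refine ⟨q.len, fun n hn => ?_⟩
      simp only
      congr 1
      have e1 := hΦq n hn
      have e2 := hΦq q.len le_rfl
      have e3 := hfq
      omega
  · -- f.inf 0 = q.inf 0
    simp only [DPath.inf]
    rw [(hv _ (min_le_right 0 q.len)).2]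
    congr 1
    rw [Nat.zero_min, Nat.zero_min, h0]
  · -- H 0 t = f.inf 0
    intro t ht
    simp only [DPath.inf]
    congr 1
    omega
  · -- eventually both constant and H frozen
    refine ⟨q.len, fun n hn => ⟨?_, ?_⟩⟩
    · simp only [DPath.inf]
      rw [(hv _ (min_le_right n q.len)).2]
      congr 1
      have e1 := hΦq n hn
      have e3 := hfq
      omega
    · intro t ht
      simp only [DPath.inf]
      congr 1
      have e1 := hΦq n hn
      have e3 := hfq
      omega
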